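/- Let x : [0,1] → ℝ solve x'(t) = -a(t) sin(x(t)-θ) with a(t) = 1/(t-t₁) - 1/(t-t₂), t₁ > 1, t₂ < 0, and suppose sin(x(t)-θ) ≠ 0 for all t ∈ [0,1]. Then there is a constant κ > 0 such that for all t ∈ [0,1], cos(x(t)-θ) = (κ²(t-t₁)² - (t-t₂)²)/(κ²(t-t₁)² + (t-t₂)²). -/

import Mathlib

/-- Integration of the characteristic ODE `x'(t) = -a(t)·sin(x(t)-θ)` with
`a(t) = 1/(t-t₁) - 1/(t-t₂)`, `t₁ > 1`, `t₂ < 0`: if `sin(x(t)-θ)` never vanishes on `[0,1]`,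
then there is `κ > 0` with `cos(x(t)-θ) = (κ²(t-t₁)² - (t-t₂)²)/(κ²(t-t₁)² + (t-t₂)²)`. -/
theorem characteristic_ode_integration (t₁ t₂ θ : ℝ) (ht₁ : 1 < t₁) (ht₂ : t₂ < 0)
    (x : ℝ → ℝ)
    (hode : ∀ t ∈ Set.Icc (0 : ℝ) 1,
      HasDerivAt x (-(1 / (t - t₁) - 1 / (t - t₂)) * Real.sin (x t - θ)) t)
    (hsin : ∀ t ∈ Set.Icc (0 : ℝ) 1, Real.sin (x t - θ) ≠ 0) :
    ∃ κ : ℝ, 0 < κ ∧ ∀ t ∈ Set.Icc (0 : ℝ) 1,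
      Real.cos (x t - θ) =
        (κ ^ 2 * (t - t₁) ^ 2 - (t - t₂) ^ 2) / (κ ^ 2 * (t - t₁) ^ 2 + (t - t₂) ^ 2) := by
  set c : ℝ → ℝ := fun t => Real.cos (x t - θ) with hc
  have hden : ∀ t ∈ Set.Icc (0:ℝ) 1, t - t₁ ≠ 0 ∧ t - t₂ ≠ 0 := by
    intro t ht
    constructor <;> intro h <;> [nlinarith [ht.2]; nlinarith [ht.1]]
  have hc1 : ∀ t ∈ Set.Icc (0:ℝ) 1, -1 < c t ∧ c t < 1 := by
    intro t ht
    have hs := hsin t ht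
    have h1 : (c t)^2 < 1 := by
      nlinarith [Real.sin_sq_add_cos_sq (x t - θ), sq_pos_of_ne_zero hs]
    constructor <;> nlinarith
  set φ : ℝ → ℝ := fun t => (1 - c t) / (1 + c t) * ((t - t₁)^2 / (t - t₂)^2) with hφ
  have hderiv : ∀ t ∈ Set.Icc (0:ℝ) 1, HasDerivAt φ 0 t := by
    intro t ht
    obtain ⟨h1, h2⟩ := hden t ht
    obtain ⟨hl, hr⟩ := hc1 t ht
    have hne : 1 + c t ≠ 0 := by linarith
    have h2sq : (t - t₂)^2 ≠ 0 := pow_ne_zero _ h2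
    -- derivative of c
    have hcd : HasDerivAt c
        (-Real.sin (x t - θ) * (-(1 / (t - t₁) - 1 / (t - t₂)) * Real.sin (x t - θ))) t := by
      exact (Real.hasDerivAt_cos (x t - θ)).comp t ((hode t ht).sub_const θ)
    set c' : ℝ := -Real.sin (x t - θ) * (-(1 / (t - t₁) - 1 / (t - t₂)) * Real.sin (x t - θ))
      with hc'
    have hrat : HasDerivAt (fun t => (1 - c t) / (1 + c t))
        (((0 - c') * (1 + c t) - (1 - c t) * (0 + c')) / (1 + c t)^2) t :=
      ((hasDerivAt_const t (1:ℝ)).sub hcd).div ((hasDerivAt_const t (1:ℝ)).add hcd) hne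
    have hq : HasDerivAt (fun t => (t - t₁)^2 / (t - t₂)^2)
        ((2 * (t - t₁) * (t - t₂)^2 - (t - t₁)^2 * (2 * (t - t₂))) / ((t - t₂)^2)^2) t := by
      have hn : HasDerivAt (fun t : ℝ => (t - t₁)^2) (2 * (t - t₁)) t := by
        have := ((hasDerivAt_id t).sub_const t₁).fun_pow 2
        simpa using this
      have hd : HasDerivAt (fun t : ℝ => (t - t₂)^2) (2 * (t - t₂)) t := by
        have := ((hasDerivAt_id t).sub_const t₂).fun_pow 2
        simpa using this
      exact hn.div hd h2sq
    have : HasDerivAt φ _ t := hrat.fun_mul hq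
    convert this using 1
    have hsq : Real.sin (x t - θ)^2 = (1 - c t) * (1 + c t) := by
      have := Real.sin_sq_add_cos_sq (x t - θ)
      simp only [hc]; nlinarith
    have hc2 : c' = (1/(t-t₁) - 1/(t-t₂)) * ((1 - c t) * (1 + c t)) := by
      rw [hc']; linear_combination (1/(t-t₁) - 1/(t-t₂)) * hsq
    rw [hc2]
    field_simp
    ring
  have hcont : ContinuousOn φ (Set.Icc 0 1) :=
    fun t ht => (hderiv t ht).continuousAt.continuousWithinAt
  have hconst : ∀ t ∈ Set.Icc (0:ℝ) 1, φ t = φ 0 :=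
    constant_of_has_deriv_right_zero hcont
      (fun t ht => ((hderiv t (Set.Ico_subset_Icc_self ht)).hasDerivWithinAt))
  have h0 : (0:ℝ) ∈ Set.Icc (0:ℝ) 1 := by constructor <;> norm_num
  have hKpos : 0 < φ 0 := by
    obtain ⟨hl, hr⟩ := hc1 0 h0
    obtain ⟨h1, h2⟩ := hden 0 h0
    have : 0 < (0 - t₁)^2 / (0 - t₂)^2 :=
      div_pos (by positivity) (by positivity)
    have h3 : 0 < (1 - c 0) / (1 + c 0) := div_pos (by linarith) (by linarith)
    exact mul_pos h3 this
  refine ⟨(Real.sqrt (φ 0))⁻¹, by positivity, ?_⟩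
  intro t ht
  have hκ : ((Real.sqrt (φ 0))⁻¹)^2 * φ 0 = 1 := by
    rw [inv_pow, Real.sq_sqrt hKpos.le]
    field_simp
  set κ : ℝ := (Real.sqrt (φ 0))⁻¹
  obtain ⟨hl, hr⟩ := hc1 t ht
  obtain ⟨h1, h2⟩ := hden t ht
  have hne : 1 + c t ≠ 0 := by linarith
  have hκpos : 0 < κ := by positivity
  have hφt : φ t = φ 0 := hconst t ht
  have hEq : (1 - c t) * (t - t₁)^2 * κ^2 = (1 + c t) * (t - t₂)^2 := by
    have h2sq : (t - t₂)^2 ≠ 0 := pow_ne_zero _ h2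
    have : (1 - c t) / (1 + c t) * ((t - t₁)^2 / (t - t₂)^2) = φ 0 := hφt
    have h' : (1 - c t) * (t - t₁)^2 = φ 0 * ((1 + c t) * (t - t₂)^2) := by
      field_simp at this
      linarith [this]
    calc (1 - c t) * (t - t₁)^2 * κ^2 = κ^2 * φ 0 * ((1 + c t) * (t - t₂)^2) := by
          rw [h']; ring
      _ = (1 + c t) * (t - t₂)^2 := by rw [hκ]; ring
  have hdpos : 0 < κ^2 * (t - t₁)^2 + (t - t₂)^2 := by positivity
  rw [eq_div_iff hdpos.ne']
  show c t * _ = _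
  linarith [hEq]
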